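/- The Jacobian matrix of the natural gradient vector field G of the polarization measure (n = 2) evaluated at each vertex (0,0), (1,0), (0,1) of the solid simplex equals the 2×2 identity matrix; in particular both eigenvalues are +1 and the vertices are repelling fixed points. -/

import Mathlib

lemma deriv_cubic (c3 c2 c1 c0 x : ℝ) :
    deriv (fun s : ℝ => c3 * s ^ 3 + c2 * s ^ 2 + c1 * s + c0) x
      = 3 * c3 * x ^ 2 + 2 * c2 * x + c1 := by
  have h : HasDerivAt (fun s : ℝ => c3 * s ^ 3 + c2 * s ^ 2 + c1 * s + c0)
      (3 * c3 * x ^ 2 + 2 * c2 * x + c1) x := by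
    have h3 := ((hasDerivAt_pow 3 x).const_mul c3)
    have h2 := ((hasDerivAt_pow 2 x).const_mul c2)
    have h1 := (hasDerivAt_id x).const_mul c1
    have := ((h3.add h2).add h1).add_const c0
    refine this.congr_deriv ?_
    norm_num
    ring
  exact h.deriv

/-- The Jacobian of the natural gradient field of the polarization measure at each
vertex of the solid simplex is the identity matrix (hence both eigenvalues are `+1`
and the vertices repel the flow). -/
theorem jacobian_at_vertices_eq_identity :
    (let G₁ : ℝ → ℝ → ℝ := fun a b =>
      -9 * a ^ 3 * b - 9 * a ^ 2 * b ^ 2 + 2 * a ^ 3 + 14 * a ^ 2 * b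
        + 5 * a * b ^ 2 - 3 * a ^ 2 - 5 * a * b + a;
    let G₂ : ℝ → ℝ → ℝ := fun a b => G₁ b a;
    let J : ℝ → ℝ → Matrix (Fin 2) (Fin 2) ℝ := fun a b =>
      !![deriv (fun s => G₁ s b) a, deriv (fun s => G₁ a s) b;
         deriv (fun s => G₂ s b) a, deriv (fun s => G₂ a s) b];
    J 0 0 = 1 ∧ J 1 0 = 1 ∧ J 0 1 = 1) := by
  intro G₁ G₂ J
  have key : ∀ a b : ℝ,
      (fun s : ℝ => G₁ s b)
        = (fun s : ℝ => (-9 * b + 2) * s ^ 3 + (-9 * b ^ 2 + 14 * b - 3) * s ^ 2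
            + (5 * b ^ 2 - 5 * b + 1) * s + 0) ∧
      (fun s : ℝ => G₁ a s)
        = (fun s : ℝ => (0 : ℝ) * s ^ 3 + (-9 * a ^ 2 + 5 * a) * s ^ 2
            + (-9 * a ^ 3 + 14 * a ^ 2 - 5 * a) * s + (2 * a ^ 3 - 3 * a ^ 2 + a)) := by
    intro a b
    constructor <;> funext s <;> simp only [G₁] <;> ring
  have e1 : ∀ a b : ℝ, deriv (fun s => G₁ s b) a
      = 3 * (-9 * b + 2) * a ^ 2 + 2 * (-9 * b ^ 2 + 14 * b - 3) * a
        + (5 * b ^ 2 - 5 * b + 1) := by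
    intro a b; rw [(key a b).1, deriv_cubic]
  have e2 : ∀ a b : ℝ, deriv (fun s => G₁ a s) b
      = 3 * 0 * b ^ 2 + 2 * (-9 * a ^ 2 + 5 * a) * b
        + (-9 * a ^ 3 + 14 * a ^ 2 - 5 * a) := by
    intro a b; rw [(key a b).2, deriv_cubic]
  have hG₂₁ : ∀ b : ℝ, (fun s => G₂ s b) = (fun s => G₁ b s) := by
    intro b; funext s; rfl
  have hG₂₂ : ∀ a : ℝ, (fun s => G₂ a s) = (fun s => G₁ s a) := by
    intro a; funext s; rfl
  refine ⟨?_, ?_, ?_⟩ <;>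
  · show (!![_,_;_,_] : Matrix (Fin 2) (Fin 2) ℝ) = 1
    simp only [G₂]
    simp only [e1, e2]
    rw [Matrix.one_fin_two]
    norm_num
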